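/- The one-dimensional SSIM luminance component l(x,y) = (2xy + c)/(x² + y² + c) with c > 0, viewed as a function of x > 0 for fixed y > 0, is quasi-concave on (0,∞); equivalently, 1 − l(x,y) is quasi-convex in x on (0,∞). -/
import Mathlib


/-- The SSIM luminance component is quasi-concave in its first argument on `(0, ∞)`,
equivalently `1 - l` is quasi-convex there. -/
theorem ssim_luminance_quasiconcave (y c : ℝ) (hy : 0 < y) (hc : 0 < c) :
    QuasiconcaveOn ℝ (Set.Ioi (0 : ℝ))
        (fun x => (2 * x * y + c) / (x ^ 2 + y ^ 2 + c)) ∧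
    QuasiconvexOn ℝ (Set.Ioi (0 : ℝ))
        (fun x => 1 - (2 * x * y + c) / (x ^ 2 + y ^ 2 + c)) := by
  have hden : ∀ x : ℝ, 0 < x ^ 2 + y ^ 2 + c := fun x => by positivity
  have key : QuasiconcaveOn ℝ (Set.Ioi (0 : ℝ))
      (fun x => (2 * x * y + c) / (x ^ 2 + y ^ 2 + c)) := by
    intro b
    by_cases hb : b ≤ 0
    · have hset : {x ∈ Set.Ioi (0:ℝ) | b ≤ (2 * x * y + c) / (x ^ 2 + y ^ 2 + c)}
          = Set.Ioi (0:ℝ) := by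
        ext x
        simp only [Set.mem_setOf_eq, Set.mem_Ioi, and_iff_left_iff_imp]
        intro hx
        refine hb.trans (le_of_lt ?_)
        have hnum : 0 < 2 * x * y + c := by positivity
        exact div_pos hnum (hden x)
      rw [hset]
      exact convex_Ioi 0
    · push_neg at hb
      have hg : ConvexOn ℝ (Set.Ioi (0:ℝ))
          (fun x => b * x ^ 2 - 2 * y * x + (b * (y ^ 2 + c) - c)) := by
        refine ⟨convex_Ioi 0, ?_⟩
        intro p _ q _ a a' ha ha' hab
        simp only [smul_eq_mul]
        have h1 : a' = 1 - a := by linarith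
        subst h1
        nlinarith [mul_nonneg (mul_nonneg (mul_nonneg hb.le ha) ha') (sq_nonneg (p - q))]
      have hC := hg.convex_le 0
      have hset : {x ∈ Set.Ioi (0:ℝ) | b ≤ (2 * x * y + c) / (x ^ 2 + y ^ 2 + c)}
          = {x ∈ Set.Ioi (0:ℝ) |
              b * x ^ 2 - 2 * y * x + (b * (y ^ 2 + c) - c) ≤ 0} := by
        ext x
        simp only [Set.mem_setOf_eq, Set.mem_Ioi, and_congr_right_iff]
        intro _
        rw [le_div_iff₀ (hden x)]
        constructor <;> intro h <;> nlinarith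
      rw [hset]
      exact hC
  refine ⟨key, ?_⟩
  intro b
  have hset : {x ∈ Set.Ioi (0:ℝ) |
        1 - (2 * x * y + c) / (x ^ 2 + y ^ 2 + c) ≤ b}
      = {x ∈ Set.Ioi (0:ℝ) |
        1 - b ≤ (2 * x * y + c) / (x ^ 2 + y ^ 2 + c)} := by
    ext x
    simp only [Set.mem_setOf_eq, Set.mem_sep_iff, and_congr_right_iff]
    intro _
    constructor <;> intro h <;> linarith
  rw [hset]
  exact key (1 - b)
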